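/- Let 1≤p<∞, r>0, and let ρ be a metric on ℂⁿ with values norms on ℂᵈ. Suppose that for each cube Q⊂ℂⁿ of side length r there are positive invertible self-adjoint d×d matrices R_Q and R*_Q satisfying ρ_{p,Q}(x) ≤ |R_Q x| ≤ √d·ρ_{p,Q}(x) and ρ*_{p',Q}(x) ≤ |R*_Q x| ≤ √d·ρ*_{p',Q}(x) for all x∈ℂᵈ. Then ρ is an A_{p,r}-metric if and only if sup over cubes Q of side length r of the operator norm ‖R_Q R*_Q‖ is finite; moreover A_{p,r}(ρ) ≤ sup_Q ‖R_Q R*_Q‖ ≤ d·A_{p,r}(ρ). -/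

import Mathlib

open MeasureTheory ENNReal
open scoped ComplexOrder

noncomputable section

/-- `ℂⁿ` as a Euclidean space. -/
abbrev Cspace (n : ℕ) := EuclideanSpace ℂ (Fin n)

/-- Lebesgue measure on `ℂⁿ`. -/
instance CspaceMeasureSpace (n : ℕ) : MeasureSpace (Cspace n) :=
  ⟨Measure.map (MeasurableEquiv.toLp 2 (Fin n → ℂ)) volume⟩

/-- The (closed) cube in `ℂⁿ ≅ ℝ^{2n}` centered at `u` with side length `r`. -/
def cube {n : ℕ} (u : Cspace n) (r : ℝ) : Set (Cspace n) :=
  {z | ∀ j, |(z j).re - (u j).re| ≤ r / 2 ∧ |(z j).im - (u j).im| ≤ r / 2}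

/-- A `d × d` complex matrix acting on the Euclidean space `ℂᵈ`. -/
def matAct {d : ℕ} (M : Matrix (Fin d) (Fin d) ℂ) (x : EuclideanSpace ℂ (Fin d)) :
    EuclideanSpace ℂ (Fin d) :=
  Matrix.toEuclideanLin M x

/-- The operator norm of a `d × d` matrix acting on Euclidean `ℂᵈ`. -/
def matOpNorm {d : ℕ} (M : Matrix (Fin d) (Fin d) ℂ) : ℝ :=
  ‖(Matrix.toEuclideanCLM (𝕜 := ℂ) M :
      EuclideanSpace ℂ (Fin d) →L[ℂ] EuclideanSpace ℂ (Fin d))‖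

open scoped Classical in
/-- The real power `M ^ t` of a positive definite (Hermitian) matrix, defined through the
spectral functional calculus; junk value `1` if `M` is not positive definite. -/
def matRpow {d : ℕ} (M : Matrix (Fin d) (Fin d) ℂ) (t : ℝ) : Matrix (Fin d) (Fin d) ℂ :=
  if h : M.PosDef then h.1.cfc (fun x => x ^ t) else 1

/-- A matrix weight: measurable, a.e. positive definite (hence invertible self-adjoint),
with `W` and `W⁻¹` locally integrable. -/
def IsMatrixWeight {n d : ℕ} (W : Cspace n → Matrix (Fin d) (Fin d) ℂ) : Prop :=
  (∀ i j, Measurable fun z => W z i j) ∧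
  (∀ᵐ z ∂(volume : Measure (Cspace n)), (W z).PosDef) ∧
  (∀ i j, LocallyIntegrable (fun z => W z i j) volume) ∧
  (∀ i j, LocallyIntegrable (fun z => (W z)⁻¹ i j) volume)

/-- The Gaussian density `(α/π)^n e^{-α|u|²}`. -/
def gaussDensity {n : ℕ} (α : ℝ) (u : Cspace n) : ℝ :=
  (α / Real.pi) ^ n * Real.exp (-α * ‖u‖ ^ 2)

/-- The `L^p_α`-norm `(∫ ‖f(z)‖^p e^{-(pα/2)|z|²} dv(z))^{1/p}` (value in `ℝ≥0∞`). -/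
def lpNormGen {E : Type*} [NormedAddCommGroup E] {n : ℕ} (α p : ℝ) (f : Cspace n → E) : ℝ≥0∞ :=
  (∫⁻ z, (‖f z‖₊ : ℝ≥0∞) ^ p * ENNReal.ofReal (Real.exp (-(p * α / 2) * ‖z‖ ^ 2))) ^ (1 / p)

/-- The norm of `L^p_{α,W}(ℂⁿ;ℂᵈ)`. -/
def wLpNorm {n d : ℕ} (α p : ℝ) (W : Cspace n → Matrix (Fin d) (Fin d) ℂ)
    (f : Cspace n → EuclideanSpace ℂ (Fin d)) : ℝ≥0∞ :=
  lpNormGen α p (fun z => matAct (matRpow (W z) (1 / p)) (f z))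

/-- The norm of `L^∞_{α,V}(ℂⁿ;ℂᵈ)`: `ess sup |V(z) f(z)| e^{-(α/2)|z|²}`. -/
def wLinfNorm {n d : ℕ} (α : ℝ) (V : Cspace n → Matrix (Fin d) (Fin d) ℂ)
    (f : Cspace n → EuclideanSpace ℂ (Fin d)) : ℝ≥0∞ :=
  essSup (fun z => (‖matAct (V z) (f z)‖₊ : ℝ≥0∞) *
    ENNReal.ofReal (Real.exp (-(α / 2) * ‖z‖ ^ 2))) volume

/-- The Fock projection `P_α f(z) = ∫ f(u) e^{α⟨z,u⟩} dλ_α(u)`. -/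
def fockProj {n d : ℕ} (α : ℝ) (f : Cspace n → EuclideanSpace ℂ (Fin d)) :
    Cspace n → EuclideanSpace ℂ (Fin d) :=
  fun z => ∫ u, gaussDensity α u • (Complex.exp ((α : ℂ) * (inner ℂ u z : ℂ)) • f u)

/-- The maximal Fock projection
`P⁺_{α,W} f(z) = ∫ |W^{1/p}(z) W^{-1/p}(u) f(u)| |e^{α⟨z,u⟩}| dλ_α(u)`. -/
def maxFockProj {n d : ℕ} (α p : ℝ) (W : Cspace n → Matrix (Fin d) (Fin d) ℂ)
    (f : Cspace n → EuclideanSpace ℂ (Fin d)) : Cspace n → ℝ :=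
  fun z => ∫ u, gaussDensity α u *
    (‖matAct (matRpow (W z) (1 / p)) (matAct (matRpow (W u) (-(1 / p))) (f u))‖ *
      ‖Complex.exp ((α : ℂ) * (inner ℂ u z : ℂ))‖)

/-- `P_α` is bounded on `L^p_{α,W}(ℂⁿ;ℂᵈ)` with constant `C`. -/
def FockProjBdd {n d : ℕ} (α p : ℝ) (W : Cspace n → Matrix (Fin d) (Fin d) ℂ) (C : ℝ) : Prop :=
  ∀ f : Cspace n → EuclideanSpace ℂ (Fin d), Measurable f → wLpNorm α p W f < ⊤ →
    wLpNorm α p W (fockProj α f) ≤ ENNReal.ofReal C * wLpNorm α p W f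

/-- `P⁺_{α,W}` is bounded from `L^p_α(ℂⁿ;ℂᵈ)` to `L^p_α(ℂⁿ;ℂ)` with constant `C`. -/
def MaxFockProjBdd {n d : ℕ} (α p : ℝ) (W : Cspace n → Matrix (Fin d) (Fin d) ℂ) (C : ℝ) : Prop :=
  ∀ f : Cspace n → EuclideanSpace ℂ (Fin d), Measurable f → lpNormGen α p f < ⊤ →
    lpNormGen α p (maxFockProj α p W f) ≤ ENNReal.ofReal C * lpNormGen α p f

/-- The normalized reproducing kernel `k^α_u(z) = e^{α⟨z,u⟩ - (α/2)|u|²}`. -/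
def fockKernel {n : ℕ} (α : ℝ) (u : Cspace n) (z : Cspace n) : ℂ :=
  Complex.exp ((α : ℂ) * (inner ℂ u z : ℂ) - ((α / 2 * ‖u‖ ^ 2 : ℝ) : ℂ))

/-- The operator `P_{α,u,r} f = χ_{Q_r(u)} k^α_u ∫_{Q_r(u)} f conj(k^α_u) dλ_α`. -/
def cubeProj {n d : ℕ} (α : ℝ) (u : Cspace n) (r : ℝ)
    (f : Cspace n → EuclideanSpace ℂ (Fin d)) : Cspace n → EuclideanSpace ℂ (Fin d) :=
  fun z => Set.indicator (cube u r)
    (fun w => fockKernel α u w •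
      (∫ ζ in cube u r, gaussDensity α ζ • ((starRingEnd ℂ) (fockKernel α u ζ) • f ζ))) z

/-- The pairing `⟨f,g⟩_α = ∫ ⟨f(z), g(z)⟩ e^{-α|z|²} dv(z)` (the inner product being linear
in the first slot and conjugate-linear in the second one). -/
def fockPairing {n d : ℕ} (α : ℝ) (f g : Cspace n → EuclideanSpace ℂ (Fin d)) : ℂ :=
  ∫ z, Real.exp (-α * ‖z‖ ^ 2) • (inner ℂ (g z) (f z) : ℂ)

/-- A norm on `ℂᵈ` (as a real-valued function). -/
def IsANorm {d : ℕ} (g : EuclideanSpace ℂ (Fin d) → ℝ) : Prop :=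
  (∀ x, x ≠ 0 → 0 < g x) ∧ (∀ (c : ℂ) x, g (c • x) = ‖c‖ * g x) ∧
  (∀ x y, g (x + y) ≤ g x + g y)

/-- A metric: a measurable family of norms on `ℂᵈ` indexed by `ℂⁿ`. -/
def IsMetric {n d : ℕ} (ρ : Cspace n → EuclideanSpace ℂ (Fin d) → ℝ) : Prop :=
  (∀ z, IsANorm (ρ z)) ∧ (∀ x, Measurable fun z => ρ z x)

/-- The dual norm `ρ*(x) = sup_{y ≠ 0} |⟨x,y⟩| / ρ(y)` (value in `ℝ≥0∞`). -/
def dualNormE {d : ℕ} (g : EuclideanSpace ℂ (Fin d) → ℝ) (x : EuclideanSpace ℂ (Fin d)) :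
    ℝ≥0∞ :=
  ⨆ (y : EuclideanSpace ℂ (Fin d)) (_ : y ≠ 0),
    (‖(inner ℂ y x : ℂ)‖₊ : ℝ≥0∞) / ENNReal.ofReal (g y)

/-- The dual of an `ℝ≥0∞`-valued gauge on `ℂᵈ`. -/
def dualGaugeE {d : ℕ} (G : EuclideanSpace ℂ (Fin d) → ℝ≥0∞) (x : EuclideanSpace ℂ (Fin d)) :
    ℝ≥0∞ :=
  ⨆ (y : EuclideanSpace ℂ (Fin d)) (_ : y ≠ 0), (‖(inner ℂ y x : ℂ)‖₊ : ℝ≥0∞) / G y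

/-- The `q`-average of an `ℝ≥0∞`-valued gauge family over a set `Q`:
`((1/v(Q)) ∫_Q F_z(x)^q dv(z))^{1/q}`. -/
def avgGauge {n d : ℕ} (q : ℝ) (Q : Set (Cspace n))
    (F : Cspace n → EuclideanSpace ℂ (Fin d) → ℝ≥0∞) (x : EuclideanSpace ℂ (Fin d)) : ℝ≥0∞ :=
  ((∫⁻ z in Q, (F z x) ^ q) / volume Q) ^ (1 / q)

/-- The averaged norm `ρ_{q,Q}(x) = ((1/v(Q)) ∫_Q ρ_z(x)^q dv(z))^{1/q}`. -/
def metricAvg {n d : ℕ} (q : ℝ) (Q : Set (Cspace n))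
    (ρ : Cspace n → EuclideanSpace ℂ (Fin d) → ℝ) (x : EuclideanSpace ℂ (Fin d)) : ℝ≥0∞ :=
  avgGauge q Q (fun z y => ENNReal.ofReal (ρ z y)) x

/-- The averaged dual norm `ρ*_{p',Q}` where `p'` is the conjugate exponent of `p`
(`ess sup` over `Q` of the pointwise dual norms when `p = 1`, i.e. `p' = ∞`). -/
def metricDualAvg {n d : ℕ} (p : ℝ) (Q : Set (Cspace n))
    (ρ : Cspace n → EuclideanSpace ℂ (Fin d) → ℝ) (x : EuclideanSpace ℂ (Fin d)) : ℝ≥0∞ :=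
  if p = 1 then essSup (fun z => dualNormE (ρ z) x) (volume.restrict Q)
  else avgGauge (p / (p - 1)) Q (fun z => dualNormE (ρ z)) x

/-- The `A_{p,r}`-condition for a metric `ρ`, with constant `C`:
`ρ*_{p',Q}(x) ≤ C (ρ_{p,Q})*(x)` for all `x ∈ ℂᵈ` and all cubes `Q` of side length `r`. -/
def IsAprBound {n d : ℕ} (p r : ℝ) (ρ : Cspace n → EuclideanSpace ℂ (Fin d) → ℝ) (C : ℝ) :
    Prop :=
  ∀ (u : Cspace n) (x : EuclideanSpace ℂ (Fin d)),
    metricDualAvg p (cube u r) ρ x ≤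
      ENNReal.ofReal C * dualGaugeE (metricAvg p (cube u r) ρ) x

/-- `ρ` is an `A_{p,r}`-metric. -/
def IsAprMetric {n d : ℕ} (p r : ℝ) (ρ : Cspace n → EuclideanSpace ℂ (Fin d) → ℝ) : Prop :=
  ∃ C : ℝ, 0 ≤ C ∧ IsAprBound p r ρ C

/-- The metric `ρ_z(x) = |W^{1/p}(z) x|` associated with a matrix weight `W`. -/
def weightMetric {n d : ℕ} (p : ℝ) (W : Cspace n → Matrix (Fin d) (Fin d) ℂ) :
    Cspace n → EuclideanSpace ℂ (Fin d) → ℝ :=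
  fun z x => ‖matAct (matRpow (W z) (1 / p)) x‖

/-- `W` is an `A_{p,r}`-weight. -/
def IsAprWeight {n d : ℕ} (p r : ℝ) (W : Cspace n → Matrix (Fin d) (Fin d) ℂ) : Prop :=
  IsAprMetric p r (weightMetric p W)

end

set_option maxHeartbeats 1000000

section Stmt10Aux

open Matrix
open scoped ComplexOrder

variable {d : ℕ}

private lemma matAct_mul' (M N : Matrix (Fin d) (Fin d) ℂ) (x : EuclideanSpace ℂ (Fin d)) :
    matAct (M * N) x = matAct M (matAct N x) := by
  simp [matAct, Matrix.toEuclideanLin, Matrix.toLin_mul]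

private lemma matAct_one' (x : EuclideanSpace ℂ (Fin d)) : matAct (1 : Matrix (Fin d) (Fin d) ℂ) x = x := by
  simp [matAct, Matrix.toEuclideanLin_apply]

private lemma matAct_zero' (M : Matrix (Fin d) (Fin d) ℂ) : matAct M 0 = 0 :=
  map_zero (Matrix.toEuclideanLin M)

private lemma inv_mul_matAct {M : Matrix (Fin d) (Fin d) ℂ} (hM : M.PosDef)
    (x : EuclideanSpace ℂ (Fin d)) : matAct M⁻¹ (matAct M x) = x := by
  rw [← matAct_mul', Matrix.nonsing_inv_mul M ((Matrix.isUnit_iff_isUnit_det M).mp hM.isUnit),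
    matAct_one']

private lemma mul_inv_matAct {M : Matrix (Fin d) (Fin d) ℂ} (hM : M.PosDef)
    (x : EuclideanSpace ℂ (Fin d)) : matAct M (matAct M⁻¹ x) = x := by
  rw [← matAct_mul', Matrix.mul_nonsing_inv M ((Matrix.isUnit_iff_isUnit_det M).mp hM.isUnit),
    matAct_one']

private lemma inner_matAct' (M : Matrix (Fin d) (Fin d) ℂ) (x y : EuclideanSpace ℂ (Fin d)) :
    (inner ℂ (matAct M y) x : ℂ) = inner ℂ y (matAct Mᴴ x) := by
  unfold matAct
  rw [Matrix.toEuclideanLin_conjTranspose_eq_adjoint, LinearMap.adjoint_inner_right]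

private lemma inner_posdef {M : Matrix (Fin d) (Fin d) ℂ} (hM : M.PosDef)
    (x y : EuclideanSpace ℂ (Fin d)) :
    (inner ℂ y x : ℂ) = inner ℂ (matAct M y) (matAct M⁻¹ x) := by
  rw [inner_matAct', hM.1, mul_inv_matAct hM]

private lemma norm_matAct_le' (M : Matrix (Fin d) (Fin d) ℂ) (x : EuclideanSpace ℂ (Fin d)) :
    ‖matAct M x‖ ≤ matOpNorm M * ‖x‖ :=
  (Matrix.toEuclideanCLM (𝕜 := ℂ) M).le_opNorm x

private lemma matOpNorm_le' {M : Matrix (Fin d) (Fin d) ℂ} {B : ℝ} (hB : 0 ≤ B)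
    (h : ∀ x, ‖matAct M x‖ ≤ B * ‖x‖) : matOpNorm M ≤ B :=
  ContinuousLinearMap.opNorm_le_bound _ hB h

private lemma matOpNorm_conjTranspose' (M : Matrix (Fin d) (Fin d) ℂ) :
    matOpNorm Mᴴ = matOpNorm M := by
  unfold matOpNorm
  rw [show Mᴴ = star M from rfl, map_star, ContinuousLinearMap.star_eq_adjoint]
  exact ContinuousLinearMap.adjoint.norm_map _

private lemma cauchy_bound {M : Matrix (Fin d) (Fin d) ℂ} (hM : M.PosDef)
    (x y : EuclideanSpace ℂ (Fin d)) :
    (‖(inner ℂ y x : ℂ)‖₊ : ℝ≥0∞) ≤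
      ENNReal.ofReal ‖matAct M⁻¹ x‖ * ENNReal.ofReal ‖matAct M y‖ := by
  rw [← ENNReal.ofReal_mul (norm_nonneg _), ← ENNReal.ofReal_coe_nnreal, coe_nnnorm]
  apply ENNReal.ofReal_le_ofReal
  calc ‖(inner ℂ y x : ℂ)‖ = ‖(inner ℂ (matAct M y) (matAct M⁻¹ x) : ℂ)‖ := by
        rw [← inner_posdef hM]
    _ ≤ ‖matAct M y‖ * ‖matAct M⁻¹ x‖ := norm_inner_le_norm _ _
    _ = _ := mul_comm _ _

private lemma dualGaugeE_matAct {M : Matrix (Fin d) (Fin d) ℂ} (hM : M.PosDef)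
    (x : EuclideanSpace ℂ (Fin d)) :
    dualGaugeE (fun y => ENNReal.ofReal ‖matAct M y‖) x = ENNReal.ofReal ‖matAct M⁻¹ x‖ := by
  apply le_antisymm
  · exact iSup₂_le fun y hy => ENNReal.div_le_of_le_mul (cauchy_bound hM x y)
  · rcases eq_or_ne x 0 with rfl | hx
    · simp [matAct_zero']
    · set w := matAct M⁻¹ x with hw
      have hw0 : w ≠ 0 := fun h => hx (by rw [← mul_inv_matAct hM x, ← hw, h, matAct_zero'])
      set y0 := matAct M⁻¹ w with hy0def
      have hy0 : y0 ≠ 0 := fun h => hw0 (by rw [← mul_inv_matAct hM w, ← hy0def, h, matAct_zero'])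
      refine le_trans ?_ (le_iSup₂ (f := fun (y : EuclideanSpace ℂ (Fin d)) (_ : y ≠ 0) =>
        (‖(inner ℂ y x : ℂ)‖₊ : ℝ≥0∞) / ENNReal.ofReal ‖matAct M y‖) y0 hy0)
      have h1 : matAct M y0 = w := mul_inv_matAct hM w
      have h2 : (inner ℂ y0 x : ℂ) = inner ℂ w w := by rw [inner_posdef hM x y0, h1, ← hw]
      rw [h2, h1, ← ENNReal.ofReal_coe_nnreal, coe_nnnorm]
      have h3 : ‖(inner ℂ w w : ℂ)‖ = ‖w‖ * ‖w‖ := by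
        rw [inner_self_eq_norm_sq_to_K (𝕜 := ℂ)]
        simp [sq]
      rw [h3, ENNReal.ofReal_mul (norm_nonneg _), mul_div_assoc,
        ENNReal.div_self (by simpa using norm_pos_iff.mpr hw0) ENNReal.ofReal_ne_top, mul_one]

private lemma dualGaugeE_anti {G G' : EuclideanSpace ℂ (Fin d) → ℝ≥0∞}
    (h : ∀ y, y ≠ 0 → G y ≤ G' y) (x : EuclideanSpace ℂ (Fin d)) :
    dualGaugeE G' x ≤ dualGaugeE G x :=
  iSup₂_le fun y hy => le_trans (ENNReal.div_le_div_left (h y hy) _)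
    (le_iSup₂ (f := fun (y : EuclideanSpace ℂ (Fin d)) (_ : y ≠ 0) =>
      (‖(inner ℂ y x : ℂ)‖₊ : ℝ≥0∞) / G y) y hy)

private lemma dualGaugeE_le_scaled {M : Matrix (Fin d) (Fin d) ℂ} (hM : M.PosDef)
    {G : EuclideanSpace ℂ (Fin d) → ℝ≥0∞} {c : ℝ} (hc : 0 < c)
    (h : ∀ y, ENNReal.ofReal ‖matAct M y‖ ≤ ENNReal.ofReal c * G y)
    (x : EuclideanSpace ℂ (Fin d)) :
    dualGaugeE G x ≤ ENNReal.ofReal c * ENNReal.ofReal ‖matAct M⁻¹ x‖ := by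
  refine iSup₂_le fun y hy => ?_
  have hMy : matAct M y ≠ 0 := fun h0 => hy (by rw [← inv_mul_matAct hM y, h0, matAct_zero'])
  have hMypos : 0 < ‖matAct M y‖ := norm_pos_iff.mpr hMy
  have hGlow : ENNReal.ofReal (‖matAct M y‖ / c) ≤ G y := by
    rw [ENNReal.ofReal_div_of_pos hc]
    exact ENNReal.div_le_of_le_mul' (h y)
  refine le_trans (ENNReal.div_le_div_left hGlow _) ?_
  rw [ENNReal.div_le_iff (ENNReal.ofReal_pos.mpr (div_pos hMypos hc)).ne' ENNReal.ofReal_ne_top]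
  calc (‖(inner ℂ y x : ℂ)‖₊ : ℝ≥0∞)
      ≤ ENNReal.ofReal ‖matAct M⁻¹ x‖ * ENNReal.ofReal ‖matAct M y‖ := cauchy_bound hM x y
    _ = ENNReal.ofReal c * ENNReal.ofReal ‖matAct M⁻¹ x‖ *
          ENNReal.ofReal (‖matAct M y‖ / c) := by
        rw [← ENNReal.ofReal_mul (norm_nonneg _), ← ENNReal.ofReal_mul hc.le,
          ← ENNReal.ofReal_mul (by positivity)]
        congr 1
        field_simp

end Stmt10Aux

/-- in terms of the reducing operators `R_Q`, `R*_Q` of `ρ_{p,Q}` and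
`ρ*_{p',Q}`, the metric `ρ` is an `A_{p,r}`-metric iff `sup_Q ‖R_Q R*_Q‖ < ∞`, with
`A_{p,r}(ρ) ≤ sup_Q ‖R_Q R*_Q‖ ≤ d ⬝ A_{p,r}(ρ)`. -/
theorem stmt10 {n d : ℕ} (hn : 0 < n) (hd : 0 < d) (p r : ℝ) (hp : 1 ≤ p) (hr : 0 < r)
    (ρ : Cspace n → EuclideanSpace ℂ (Fin d) → ℝ) (hρ : IsMetric ρ)
    (R Rs : Cspace n → Matrix (Fin d) (Fin d) ℂ)
    (hRpos : ∀ u, (R u).PosDef) (hRspos : ∀ u, (Rs u).PosDef)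
    (hR : ∀ u x, metricAvg p (cube u r) ρ x ≤ ENNReal.ofReal ‖matAct (R u) x‖ ∧
      ENNReal.ofReal ‖matAct (R u) x‖ ≤
        ENNReal.ofReal (Real.sqrt d) * metricAvg p (cube u r) ρ x)
    (hRs : ∀ u x, metricDualAvg p (cube u r) ρ x ≤ ENNReal.ofReal ‖matAct (Rs u) x‖ ∧
      ENNReal.ofReal ‖matAct (Rs u) x‖ ≤
        ENNReal.ofReal (Real.sqrt d) * metricDualAvg p (cube u r) ρ x) :
    (IsAprMetric p r ρ ↔ ∃ B : ℝ, ∀ u, matOpNorm (R u * Rs u) ≤ B) ∧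
    (∀ B : ℝ, (∀ u, matOpNorm (R u * Rs u) ≤ B) → IsAprBound p r ρ B) ∧
    (∀ C : ℝ, 0 ≤ C → IsAprBound p r ρ C → ∀ u, matOpNorm (R u * Rs u) ≤ d * C) := by
  have hdR : (0:ℝ) ≤ (d:ℝ) := Nat.cast_nonneg d
  have hs : 0 < Real.sqrt d := Real.sqrt_pos.mpr (by exact_mod_cast hd)
  have hss : Real.sqrt d * Real.sqrt d = (d:ℝ) := Real.mul_self_sqrt hdR
  have hswap : ∀ u, matOpNorm (R u * Rs u) = matOpNorm (Rs u * R u) := by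
    intro u
    rw [← matOpNorm_conjTranspose' (Rs u * R u), Matrix.conjTranspose_mul,
      (hRpos u).1, (hRspos u).1]
  have claim3 : ∀ C : ℝ, 0 ≤ C → IsAprBound p r ρ C → ∀ u, matOpNorm (R u * Rs u) ≤ d * C := by
    intro C hC hApr u
    rw [hswap u]
    refine matOpNorm_le' (by positivity) fun y => ?_
    have key : ENNReal.ofReal ‖matAct (Rs u) (matAct (R u) y)‖ ≤
        ENNReal.ofReal (d * C * ‖y‖) := by
      calc ENNReal.ofReal ‖matAct (Rs u) (matAct (R u) y)‖
          ≤ ENNReal.ofReal (Real.sqrt d) * metricDualAvg p (cube u r) ρ (matAct (R u) y) :=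
            (hRs u _).2
        _ ≤ ENNReal.ofReal (Real.sqrt d) *
              (ENNReal.ofReal C * dualGaugeE (metricAvg p (cube u r) ρ) (matAct (R u) y)) :=
            mul_le_mul_right (hApr u _) _
        _ ≤ ENNReal.ofReal (Real.sqrt d) * (ENNReal.ofReal C * (ENNReal.ofReal (Real.sqrt d) *
              ENNReal.ofReal ‖matAct (R u)⁻¹ (matAct (R u) y)‖)) := by
            refine mul_le_mul_right (mul_le_mul_right ?_ _) _
            exact dualGaugeE_le_scaled (hRpos u) hs (fun z => (hR u z).2) _
        _ = ENNReal.ofReal (d * C * ‖y‖) := by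
            rw [inv_mul_matAct (hRpos u), ← ENNReal.ofReal_mul hs.le,
              ← ENNReal.ofReal_mul hC, ← ENNReal.ofReal_mul hs.le]
            congr 1
            rw [show Real.sqrt d * (C * (Real.sqrt d * ‖y‖)) =
              (Real.sqrt d * Real.sqrt d) * C * ‖y‖ by ring, hss]
    rw [matAct_mul']
    exact (ENNReal.ofReal_le_ofReal_iff (by positivity)).mp key
  have claim2 : ∀ B : ℝ, (∀ u, matOpNorm (R u * Rs u) ≤ B) → IsAprBound p r ρ B := by
    intro B hB u x
    have hB0 : (0:ℝ) ≤ B := le_trans (norm_nonneg _) (hB 0)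
    calc metricDualAvg p (cube u r) ρ x
        ≤ ENNReal.ofReal ‖matAct (Rs u) x‖ := (hRs u x).1
      _ ≤ ENNReal.ofReal B * ENNReal.ofReal ‖matAct (R u)⁻¹ x‖ := by
          rw [← ENNReal.ofReal_mul hB0]
          apply ENNReal.ofReal_le_ofReal
          have hx : matAct (Rs u) x = matAct (Rs u * R u) (matAct (R u)⁻¹ x) := by
            rw [matAct_mul', mul_inv_matAct (hRpos u)]
          rw [hx]
          refine (norm_matAct_le' _ _).trans (mul_le_mul_of_nonneg_right ?_ (norm_nonneg _))
          rw [← hswap u]; exact hB u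
      _ ≤ ENNReal.ofReal B * dualGaugeE (metricAvg p (cube u r) ρ) x := by
          refine mul_le_mul_right ?_ _
          rw [← dualGaugeE_matAct (hRpos u)]
          exact dualGaugeE_anti (fun y _ => (hR u y).1) x
  refine ⟨⟨?_, ?_⟩, claim2, claim3⟩
  · rintro ⟨C, hC0, hApr⟩
    exact ⟨d * C, claim3 C hC0 hApr⟩
  · rintro ⟨B, hB⟩
    exact ⟨B, le_trans (norm_nonneg _) (hB 0), claim2 B hB⟩
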